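/- arXiv:1206.5074 — 2 statements merged into one kernel-verified Lean document; each statement's English description precedes it below -/
import Mathlib

section
/- Let μ be a Borel measure on an interval [a,b] ⊆ ℝ and let φ, ψ : [a,b] → (0,∞). Then sup over pairs x ≤ y of μ[x,y]/(φ(x)+ψ(y)) is at least sup over θ ∈ [a,b] of min( sup_{x ≤ θ} μ[x,θ]/φ(x), sup_{y ≥ θ} μ(θ,y]/ψ(y) ). -/
open MeasureTheory Set ENNReal

theorem sup_ratio_lower_bound (μ : Measure ℝ) (a b : ℝ) (φ ψ : ℝ → ℝ)
    (hφ : ∀ x ∈ Icc a b, 0 < φ x) (hψ : ∀ x ∈ Icc a b, 0 < ψ x) :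
    (⨆ θ ∈ Icc a b,
        min (⨆ x ∈ Icc a θ, μ (Icc x θ) / ENNReal.ofReal (φ x))
            (⨆ y ∈ Icc θ b, μ (Ioc θ y) / ENNReal.ofReal (ψ y)))
      ≤ ⨆ x ∈ Icc a b, ⨆ y ∈ Icc x b, μ (Icc x y) / ENNReal.ofReal (φ x + ψ y) := by
  refine iSup₂_le fun θ hθ => ?_
  simp only [iSup_inf_eq, inf_iSup_eq]
  refine iSup₂_le fun y hy => iSup₂_le fun x hx => ?_
  have hxb : x ∈ Icc a b := ⟨hx.1, hx.2.trans hθ.2⟩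
  have hyb : y ∈ Icc a b := ⟨hθ.1.trans hy.1, hy.2⟩
  have hyx : y ∈ Icc x b := ⟨hx.2.trans hy.1, hy.2⟩
  refine le_trans ?_ (le_iSup₂_of_le x hxb (le_iSup₂_of_le y hyx le_rfl))
  have hr : 0 < φ x := hφ x hxb
  have hs : 0 < ψ y := hψ y hyb
  set m := μ (Icc x θ) / ENNReal.ofReal (φ x) ⊓ μ (Ioc θ y) / ENNReal.ofReal (ψ y) with hm
  rw [ENNReal.le_div_iff_mul_le (Or.inl (by positivity)) (Or.inl ofReal_ne_top)]
  have hsplit : μ (Icc x y) = μ (Icc x θ) + μ (Ioc θ y) := by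
    rw [← Set.Icc_union_Ioc_eq_Icc hx.2 hy.1,
      measure_union (Set.disjoint_left.2 fun z hz hz2 => absurd hz.2 (not_le.2 hz2.1)) measurableSet_Ioc]
  have h1 : m * ENNReal.ofReal (φ x) ≤ μ (Icc x θ) :=
    ENNReal.mul_le_of_le_div inf_le_left
  have h2 : m * ENNReal.ofReal (ψ y) ≤ μ (Ioc θ y) :=
    ENNReal.mul_le_of_le_div inf_le_right
  calc m * ENNReal.ofReal (φ x + ψ y)
      = m * ENNReal.ofReal (φ x) + m * ENNReal.ofReal (ψ y) := by
        rw [ENNReal.ofReal_add hr.le hs.le, mul_add]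
    _ ≤ μ (Icc x θ) + μ (Ioc θ y) := add_le_add h1 h2
    _ = μ (Icc x y) := hsplit.symm
end

section
/- Let μ(dx) = e^{−bx} dx with b > 0 on (0,∞) and p > 1. Define H(x) = (1 − e^{−x})^{1/p} ((1 − e^{−x})^{−1/(p−1)} − e^{x/(p−1)})^{(p−1)/p} for x ∈ (0, log 2]. Then sup_{x ∈ (0, log 2]} H(x) = 1, and moreover lim_{x→0⁺} H(x) = 1. -/
open Set Filter Topology

private lemma key_simp (p : ℝ) (hp : 1 < p) {x : ℝ} (hx : 0 < x) (hx2 : x ≤ Real.log 2) :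
    (1 - Real.exp (-x)) ^ (1 / p)
        * ((1 - Real.exp (-x)) ^ (-(1 / (p - 1))) - Real.exp (x / (p - 1))) ^ ((p - 1) / p)
      = (1 - (Real.exp x - 1) ^ (1 / (p - 1))) ^ ((p - 1) / p) := by
  have hp1 : (0:ℝ) < p - 1 := by linarith
  have hp0 : (0:ℝ) < p := by linarith
  set c : ℝ := 1 / (p - 1) with hc
  set q : ℝ := (p - 1) / p with hq
  have hcpos : 0 < c := by positivity
  have hqpos : 0 < q := by positivity
  have hs1 : Real.exp (-x) < 1 := by
    rw [Real.exp_lt_one_iff]; linarith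
  have hspos : 0 < Real.exp (-x) := Real.exp_pos _
  set s : ℝ := Real.exp (-x) with hsdef
  set u : ℝ := 1 - s with hu
  have hupos : 0 < u := by simp [hu]; linarith
  have hex2 : Real.exp x ≤ 2 := by
    calc Real.exp x ≤ Real.exp (Real.log 2) := Real.exp_le_exp.mpr hx2
    _ = 2 := Real.exp_log (by norm_num)
  have hes : Real.exp x = s⁻¹ := by
    rw [hsdef, ← Real.exp_neg, neg_neg]
  have hus : u / s = Real.exp x - 1 := by
    rw [hes, hu, hsdef, ← Real.exp_neg, neg_neg]
    field_simp [hsdef]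
    rw [mul_sub, ← Real.exp_add]
    simp
  have ht0 : 0 < Real.exp x - 1 := by
    have h : 1 < Real.exp x := Real.one_lt_exp_iff.mpr hx
    linarith
  have ht1 : Real.exp x - 1 ≤ 1 := by linarith
  -- exp (x / (p-1)) = s ^ (-c)
  have hexp : Real.exp (x / (p - 1)) = s ^ (-c) := by
    rw [hsdef, ← Real.exp_mul, hc]
    ring_nf
  -- u^(-c) - s^(-c) = u^(-c) * (1 - (u/s)^c)
  have hsplit : u ^ (-c) - s ^ (-c) = u ^ (-c) * (1 - (u / s) ^ c) := by
    rw [mul_sub, mul_one, Real.div_rpow hupos.le hspos.le,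
      Real.rpow_neg hupos.le]
    rw [div_eq_mul_inv, ← mul_assoc, inv_mul_cancel₀ (by positivity), one_mul,
      ← Real.rpow_neg hspos.le]
  have hbase_nonneg : 0 ≤ 1 - (u / s) ^ c := by
    rw [hus]
    have : (Real.exp x - 1) ^ c ≤ 1 := Real.rpow_le_one ht0.le ht1 hcpos.le
    linarith
  rw [hexp, hsplit, Real.mul_rpow (by positivity) hbase_nonneg, ← mul_assoc]
  have h1 : u ^ (1 / p) * (u ^ (-c)) ^ q = 1 := by
    rw [← Real.rpow_mul hupos.le, ← Real.rpow_add hupos]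
    have : 1 / p + -c * q = 0 := by
      rw [hc, hq]; field_simp; ring
    rw [this, Real.rpow_zero]
  rw [h1, one_mul, hus]

theorem example_exponential_Ho (b p : ℝ) (hb : 0 < b) (hp : 1 < p) :
    let H : ℝ → ℝ := fun x => (1 - Real.exp (-x)) ^ (1 / p)
        * ((1 - Real.exp (-x)) ^ (-(1 / (p - 1))) - Real.exp (x / (p - 1))) ^ ((p - 1) / p)
    sSup (H '' Ioc (0:ℝ) (Real.log 2)) = 1 ∧
    Tendsto H (nhdsWithin 0 (Ioi 0)) (nhds 1) := by
  intro H
  have hp1 : (0:ℝ) < p - 1 := by linarith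
  have hp0 : (0:ℝ) < p := by linarith
  have hcpos : 0 < 1 / (p - 1) := by positivity
  have hqpos : 0 < (p - 1) / p := by positivity
  have hlog2 : (0:ℝ) < Real.log 2 := Real.log_pos (by norm_num)
  -- eventual equality near 0⁺
  have hmem : Ioc (0:ℝ) (Real.log 2) ∈ 𝓝[>] (0:ℝ) :=
    Ioc_mem_nhdsGT_of_mem ⟨le_refl 0, hlog2⟩
  have heq : ∀ x ∈ Ioc (0:ℝ) (Real.log 2),
      H x = (1 - (Real.exp x - 1) ^ (1 / (p - 1))) ^ ((p - 1) / p) := fun x hx =>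
    key_simp p hp hx.1 hx.2
  -- the tendsto part
  have htend : Tendsto H (𝓝[>] (0:ℝ)) (𝓝 1) := by
    have hg : Tendsto (fun x => (1 - (Real.exp x - 1) ^ (1 / (p - 1))) ^ ((p - 1) / p))
        (𝓝[>] (0:ℝ)) (𝓝 1) := by
      have h1 : Tendsto (fun x : ℝ => Real.exp x - 1) (𝓝[>] (0:ℝ)) (𝓝 0) := by
        have : Tendsto (fun x : ℝ => Real.exp x - 1) (𝓝 (0:ℝ)) (𝓝 0) := by
          have := (Real.continuous_exp.tendsto 0).sub (tendsto_const_nhds (x := (1:ℝ)))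
          simpa using this
        exact this.mono_left nhdsWithin_le_nhds
      have h2 : Tendsto (fun y : ℝ => y ^ (1 / (p - 1))) (𝓝 0) (𝓝 0) := by
        have hc : ContinuousAt (fun y : ℝ => y ^ (1 / (p - 1))) 0 :=
          Real.continuousAt_rpow_const 0 _ (Or.inr hcpos.le)
        have h0 : (0:ℝ) ^ (1 / (p - 1)) = 0 := Real.zero_rpow (ne_of_gt hcpos)
        have := hc.tendsto
        rwa [h0] at this
      have h3 : Tendsto (fun x : ℝ => (Real.exp x - 1) ^ (1 / (p - 1)))
          (𝓝[>] (0:ℝ)) (𝓝 0) := h2.comp h1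
      have h4 : Tendsto (fun x : ℝ => 1 - (Real.exp x - 1) ^ (1 / (p - 1)))
          (𝓝[>] (0:ℝ)) (𝓝 1) := by
        have := (tendsto_const_nhds (x := (1:ℝ)) (f := 𝓝[>] (0:ℝ))).sub h3
        simpa using this
      have h5 : ContinuousAt (fun y : ℝ => y ^ ((p - 1) / p)) 1 :=
        Real.continuousAt_rpow_const 1 _ (Or.inl one_ne_zero)
      have := (h5.tendsto.comp h4)
      simpa [Real.one_rpow, Function.comp_def] using this
    refine hg.congr' ?_
    filter_upwards [hmem] with x hx
    exact (heq x hx).symm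
  refine ⟨?_, htend⟩
  -- the sup part
  have hub : ∀ y ∈ H '' Ioc (0:ℝ) (Real.log 2), y ≤ 1 := by
    rintro y ⟨x, hx, rfl⟩
    rw [heq x hx]
    have ht0 : 0 ≤ Real.exp x - 1 := by
      have := Real.one_le_exp_iff.mpr hx.1.le
      linarith
    have ht1 : Real.exp x - 1 ≤ 1 := by
      have h2 := Real.exp_le_exp.mpr hx.2
      rw [Real.exp_log (by norm_num)] at h2
      linarith
    have htle : (Real.exp x - 1) ^ (1 / (p - 1)) ≤ 1 := Real.rpow_le_one ht0 ht1 hcpos.le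
    have htnn : 0 ≤ (Real.exp x - 1) ^ (1 / (p - 1)) := Real.rpow_nonneg ht0 _
    exact Real.rpow_le_one (by linarith) (by linarith) hqpos.le
  have hne : (H '' Ioc (0:ℝ) (Real.log 2)).Nonempty :=
    ⟨H (Real.log 2), ⟨Real.log 2, ⟨hlog2, le_refl _⟩, rfl⟩⟩
  have hbdd : BddAbove (H '' Ioc (0:ℝ) (Real.log 2)) := ⟨1, hub⟩
  refine le_antisymm (csSup_le hne hub) ?_
  have hev : ∀ᶠ x in 𝓝[>] (0:ℝ), H x ≤ sSup (H '' Ioc (0:ℝ) (Real.log 2)) := by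
    filter_upwards [hmem] with x hx
    exact le_csSup hbdd ⟨x, hx, rfl⟩
  exact le_of_tendsto htend hev
end
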